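/- arXiv:1702.08808 — 4 statements merged into one kernel-verified Lean document; each statement's English description precedes it below -/
import Mathlib

section
/- Let A be a group and let σ : A → A be a group automorphism with σ ∘ σ = id, so that σ defines an action of G = ℤ/2ℤ on A. Call an element b ∈ A a cocycle if b · σ(b) = 1, and say two cocycles b, b' are cohomologous if there exists a ∈ A with b' = a · b · σ(a)⁻¹. If the semidirect product A ⋊ ℤ/2ℤ (formed with respect to the ℤ/2ℤ-action through σ) has only finitely many conjugacy classes of elements of order 2, then the set of cocycles modulo the cohomologous relation is finite (i.e. the nonabelian first Galois cohomology H¹(ℤ/2ℤ, A) is finite). -/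
/-- If the semidirect product `A ⋊ ℤ/2ℤ` (with `ℤ/2ℤ` acting through the involution `σ`)
has only finitely many conjugacy classes of elements of order 2, then the nonabelian
first Galois cohomology `H¹(ℤ/2ℤ, A)` (cocycles `b * σ b = 1` modulo the cohomologous
relation `b' = a * b * (σ a)⁻¹`) is finite. -/
theorem finite_galois_cohomology_of_finitely_many_order_two_classes
    {A : Type*} [Group A] (σ : MulAut A) (hσ : ∀ a : A, σ (σ a) = a)
    (φ : Multiplicative (ZMod 2) →* MulAut A)
    (hφ : φ (Multiplicative.ofAdd 1) = σ)
    (hfin : ∃ S : Finset (A ⋊[φ] Multiplicative (ZMod 2)),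
      ∀ x : A ⋊[φ] Multiplicative (ZMod 2), x ≠ 1 → x ^ 2 = 1 → ∃ y ∈ S, IsConj y x) :
    ∃ T : Finset A, (∀ b ∈ T, b * σ b = 1) ∧
      ∀ b : A, b * σ b = 1 → ∃ b' ∈ T, ∃ a : A, b = a * b' * (σ a)⁻¹ := by
  classical
  obtain ⟨S, hS⟩ := hfin
  refine ⟨(S.filter (fun y => y.left * σ y.left = 1)).image SemidirectProduct.left, ?_, ?_⟩
  · intro b hb
    simp only [Finset.mem_image, Finset.mem_filter] at hb
    obtain ⟨y, ⟨-, hy⟩, rfl⟩ := hb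
    exact hy
  · intro b hb
    set g : Multiplicative (ZMod 2) := Multiplicative.ofAdd 1 with hgdef
    have hgg : g * g = 1 := by decide
    have hg1 : g ≠ 1 := by decide
    set x : A ⋊[φ] Multiplicative (ZMod 2) := ⟨b, g⟩ with hxdef
    have hx2 : x ^ 2 = 1 := by
      rw [sq]
      ext
      · simp [hxdef, hφ, hb]
      · simp [hxdef, hgg]
    have hxne : x ≠ 1 := fun h => hg1 (congrArg SemidirectProduct.right h)
    obtain ⟨y, hyS, hconj⟩ := hS x hxne hx2
    rw [isConj_iff] at hconj
    obtain ⟨c, hc⟩ := hconj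
    have hxc : x = c * y * c⁻¹ := hc.symm
    have hyr : y.right = g := by
      have h := congrArg SemidirectProduct.right hxc
      simp only [SemidirectProduct.mul_right, SemidirectProduct.inv_right] at h
      have h2 : g = y.right := by
        rw [show g = x.right from rfl, h, mul_comm c.right y.right, mul_assoc]
        simp
      exact h2.symm
    have hy2 : y ^ 2 = 1 := by
      have hy' : y = c⁻¹ * x * c := by rw [hxc]; group
      rw [hy', sq]
      have h3 : c⁻¹ * x * c * (c⁻¹ * x * c) = c⁻¹ * (x * x) * c := by group
      rw [h3, ← sq, hx2]
      simp
    have hycoc : y.left * σ y.left = 1 := by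
      have h := congrArg SemidirectProduct.left (sq y ▸ hy2)
      simpa [SemidirectProduct.mul_left, hyr, hφ] using h
    have hymem : y.left ∈ (S.filter (fun y => y.left * σ y.left = 1)).image
        SemidirectProduct.left := by
      simp only [Finset.mem_image, Finset.mem_filter]
      exact ⟨y, ⟨hyS, hycoc⟩, rfl⟩
    refine ⟨y.left, hymem, ?_⟩
    -- compute x.left = c.left * φ c.right y.left * (σ (φ c.right ... )) ...
    have hbl : b = c.left * φ c.right y.left * σ c.left⁻¹ := by
      have h := congrArg SemidirectProduct.left hxc
      simp only [SemidirectProduct.mul_left, SemidirectProduct.inv_left,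
        SemidirectProduct.inv_right, SemidirectProduct.mul_right, hyr] at h
      rw [show b = x.left from rfl, h]
      congr 1
      have : φ (c.right * g) (φ c.right⁻¹ c.left⁻¹)
          = φ (c.right * g * c.right⁻¹) c.left⁻¹ := by
        rw [← MulAut.mul_apply, ← map_mul]
      rw [this]
      have hcg : c.right * g * c.right⁻¹ = g := by
        rw [mul_comm c.right g]; group
      rw [hcg, hφ]
    have hcase : c.right = 1 ∨ c.right = g :=
      (by decide : ∀ t : Multiplicative (ZMod 2), t = 1 ∨ t = Multiplicative.ofAdd 1) c.right
    rcases hcase with h1 | h1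
    · refine ⟨c.left, ?_⟩
      rw [hbl, h1]
      simp [map_inv]
    · refine ⟨c.left * y.left⁻¹, ?_⟩
      have hσy : σ y.left = y.left⁻¹ := eq_inv_of_mul_eq_one_right hycoc
      rw [hbl, h1, hφ]
      simp only [map_mul, map_inv, hσy, mul_inv_rev, inv_inv]
      group
end

section
/- Each of the 12 points of P lies on exactly 3 of the nine lines C₁, …, C₉. Equivalently, for each of the 12 vectors v of P, exactly 3 of the nine linear forms y − ζᵏx, z − ζᵏx, z − ζᵏy (k ∈ {0,1,2}) vanish at v. -/
/-- The 12 points of the dual Hesse configuration, as vectors of `ℂ³`: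
the nine points `(1, ζⁱ, ζʲ)` together with the three coordinate points. -/
def hesseP (ζ : ℂ) : Set (ℂ × ℂ × ℂ) :=
  {v | ∃ i j : Fin 3, v = (1, ζ ^ (i : ℕ), ζ ^ (j : ℕ))} ∪
    {(1, 0, 0), (0, 1, 0), (0, 0, 1)}

/-- The nine linear forms `y - ζᵏx`, `z - ζᵏx`, `z - ζᵏy` (for `k ∈ {0,1,2}`) cutting out
the nine lines `C₁, …, C₉` of the dual Hesse configuration. -/
def hesseForm (ζ : ℂ) (t k : Fin 3) (v : ℂ × ℂ × ℂ) : ℂ :=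
  if t = 0 then v.2.1 - ζ ^ (k : ℕ) * v.1
  else if t = 1 then v.2.2 - ζ ^ (k : ℕ) * v.1
  else v.2.2 - ζ ^ (k : ℕ) * v.2.1

/-- Each of the 12 points of `P` lies on exactly 3 of the nine lines `C₁, …, C₉`:
for each vector `v` of `P`, exactly 3 of the nine linear forms vanish at `v`. -/
theorem each_hesse_point_lies_on_exactly_three_lines
    (ζ : ℂ) (hζ : IsPrimitiveRoot ζ 3) :
    ∀ v ∈ hesseP ζ, {tk : Fin 3 × Fin 3 | hesseForm ζ tk.1 tk.2 v = 0}.ncard = 3 := by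
  have hz : ζ ≠ 0 := hζ.ne_zero (by norm_num)
  have h3 : ζ ^ 3 = 1 := hζ.pow_eq_one
  have hmod : ∀ a : ℕ, ζ ^ a = ζ ^ (a % 3) := by
    intro a
    conv_lhs => rw [← Nat.div_add_mod a 3]
    rw [pow_add, pow_mul, h3, one_pow, one_mul]
  have hinj : ∀ a b : Fin 3, ζ ^ (a : ℕ) = ζ ^ (b : ℕ) ↔ a = b := by
    intro a b
    constructor
    · intro h; exact Fin.ext (hζ.pow_inj a.isLt b.isLt h)
    · rintro rfl; rfl
  have hcard : ∀ a b c : Fin 3,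
      ({((0 : Fin 3), a), (1, b), (2, c)} : Set (Fin 3 × Fin 3)).ncard = 3 := by
    intro a b c
    rw [Set.ncard_insert_of_notMem (by simp [Prod.ext_iff]),
        Set.ncard_insert_of_notMem (by simp [Prod.ext_iff]),
        Set.ncard_singleton]
  rintro v (⟨i, j, rfl⟩ | rfl | rfl | rfl)
  · have hset : {tk : Fin 3 × Fin 3 | hesseForm ζ tk.1 tk.2 (1, ζ ^ (i:ℕ), ζ ^ (j:ℕ)) = 0}
        = {((0 : Fin 3), i), (1, j), (2, j - i)} := by
      ext ⟨t, k⟩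
      simp only [Set.mem_setOf_eq, hesseForm, Set.mem_insert_iff, Set.mem_singleton_iff,
        Prod.ext_iff]
      split_ifs with h1 h2
      · subst h1
        rw [mul_one, sub_eq_zero, hinj]
        simp [eq_comm]
      · subst h2
        rw [mul_one, sub_eq_zero, hinj]
        simp [eq_comm]
      · have ht : t = 2 := by revert h1 h2; revert t; decide
        subst ht
        have key : ζ ^ (k : ℕ) * ζ ^ (i : ℕ) = ζ ^ ((k + i : Fin 3) : ℕ) := by
          rw [← pow_add, Fin.val_add, ← hmod]
        rw [key, sub_eq_zero, hinj]
        simp only [eq_sub_iff_add_eq]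
        simp [eq_comm]
    rw [hset, hcard]
  · have hset : {tk : Fin 3 × Fin 3 | hesseForm ζ tk.1 tk.2 ((1:ℂ), (0:ℂ), (0:ℂ)) = 0}
        = {((2 : Fin 3), 0), (2, 1), (2, 2)} := by
      ext ⟨t, k⟩
      fin_cases t <;> fin_cases k <;>
        simp [hesseForm, sub_eq_zero, pow_ne_zero, hz, Prod.ext_iff]
    rw [hset]
    rw [Set.ncard_insert_of_notMem (by simp [Prod.ext_iff]),
        Set.ncard_insert_of_notMem (by simp [Prod.ext_iff]),
        Set.ncard_singleton]
  · have hset : {tk : Fin 3 × Fin 3 | hesseForm ζ tk.1 tk.2 ((0:ℂ), (1:ℂ), (0:ℂ)) = 0}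
        = {((1 : Fin 3), 0), (1, 1), (1, 2)} := by
      ext ⟨t, k⟩
      fin_cases t <;> fin_cases k <;>
        simp [hesseForm, sub_eq_zero, pow_ne_zero, hz, Prod.ext_iff]
    rw [hset]
    rw [Set.ncard_insert_of_notMem (by simp [Prod.ext_iff]),
        Set.ncard_insert_of_notMem (by simp [Prod.ext_iff]),
        Set.ncard_singleton]
  · have hset : {tk : Fin 3 × Fin 3 | hesseForm ζ tk.1 tk.2 ((0:ℂ), (0:ℂ), (1:ℂ)) = 0}
        = {((0 : Fin 3), 0), (0, 1), (0, 2)} := by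
      ext ⟨t, k⟩
      fin_cases t <;> fin_cases k <;>
        simp [hesseForm, sub_eq_zero, pow_ne_zero, hz, Prod.ext_iff]
    rw [hset]
    rw [Set.ncard_insert_of_notMem (by simp [Prod.ext_iff]),
        Set.ncard_insert_of_notMem (by simp [Prod.ext_iff]),
        Set.ncard_singleton]
end

section
/- There is no line of ℙ²(ℂ) containing at least 11 of the 12 points of P; that is, there is no nonzero linear form on ℂ³ vanishing at 11 or more of the 12 vectors of P. -/
/-- The 12 points as a finset. -/
noncomputable def hesseF (ζ : ℂ) : Finset (ℂ × ℂ × ℂ) :=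
  (Finset.univ.image (fun p : Fin 3 × Fin 3 =>
      ((1 : ℂ), ζ ^ (p.1 : ℕ), ζ ^ (p.2 : ℕ)))) ∪ {(1, 0, 0), (0, 1, 0), (0, 0, 1)}

lemma hesseP_eq_coe (ζ : ℂ) : hesseP ζ = ↑(hesseF ζ) := by
  ext v
  simp [hesseP, hesseF, Prod.ext_iff]
  tauto

lemma hesseF_card_le (ζ : ℂ) : (hesseF ζ).card ≤ 12 := by
  refine le_trans (Finset.card_union_le _ _) ?_
  have h1 : (Finset.univ.image (fun p : Fin 3 × Fin 3 =>
      ((1 : ℂ), ζ ^ (p.1 : ℕ), ζ ^ (p.2 : ℕ)))).card ≤ 9 := by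
    refine le_trans (Finset.card_image_le) ?_
    simp
  have h2 : ({(1, 0, 0), (0, 1, 0), (0, 0, 1)} : Finset (ℂ × ℂ × ℂ)).card ≤ 3 := by
    have e1 := Finset.card_insert_le ((1:ℂ), (0:ℂ), (0:ℂ))
      ({(0, 1, 0), (0, 0, 1)} : Finset (ℂ × ℂ × ℂ))
    have e2 := Finset.card_insert_le ((0:ℂ), (1:ℂ), (0:ℂ))
      ({(0, 0, 1)} : Finset (ℂ × ℂ × ℂ))
    have e3 : ({(0, 0, 1)} : Finset (ℂ × ℂ × ℂ)).card = 1 := Finset.card_singleton _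
    omega
  omega

/-- No line of `ℙ²(ℂ)` contains at least 11 of the 12 points of `P`: there is no nonzero
linear form on `ℂ³` vanishing at 11 or more of the 12 vectors of `P`. -/
theorem no_line_through_eleven_hesse_points
    (ζ : ℂ) (hζ : IsPrimitiveRoot ζ 3) :
    ¬ ∃ f : (ℂ × ℂ × ℂ) →ₗ[ℂ] ℂ, f ≠ 0 ∧ 11 ≤ {v ∈ hesseP ζ | f v = 0}.ncard := by
  rintro ⟨f, hf0, hcard⟩
  -- distinctness of 1, ζ, ζ²
  have hpow : ∀ j₁ j₂ : Fin 3, j₁ ≠ j₂ → ζ ^ (j₁ : ℕ) ≠ ζ ^ (j₂ : ℕ) := by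
    intro j₁ j₂ hne h
    exact hne (Fin.ext (hζ.pow_inj j₁.isLt j₂.isLt h))
  -- pairwise: any two distinct points cannot both be off the line
  have pair : ∀ u w : ℂ × ℂ × ℂ, u ∈ hesseP ζ → w ∈ hesseP ζ → u ≠ w →
      f u = 0 ∨ f w = 0 := by
    intro u w hu hw huw
    by_contra h
    push_neg at h
    obtain ⟨hfu, hfw⟩ := h
    have hsub : {v ∈ hesseP ζ | f v = 0} ⊆ ↑(((hesseF ζ).erase u).erase w) := by
      intro v hv
      obtain ⟨hvP, hvf⟩ := hv
      have hvF : v ∈ hesseF ζ := by rwa [hesseP_eq_coe, Finset.mem_coe] at hvP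
      refine Finset.mem_coe.2 (Finset.mem_erase.2 ⟨?_, Finset.mem_erase.2 ⟨?_, hvF⟩⟩)
      · rintro rfl; exact hfw hvf
      · rintro rfl; exact hfu hvf
    have hle : {v ∈ hesseP ζ | f v = 0}.ncard ≤ (((hesseF ζ).erase u).erase w).card := by
      have := Set.ncard_le_ncard hsub (Finset.finite_toSet _)
      rwa [Set.ncard_coe_finset] at this
    have huF : u ∈ hesseF ζ := by rwa [hesseP_eq_coe, Finset.mem_coe] at hu
    have hwF : w ∈ (hesseF ζ).erase u := by
      refine Finset.mem_erase.2 ⟨Ne.symm huw, ?_⟩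
      rwa [hesseP_eq_coe, Finset.mem_coe] at hw
    have hc1 : (((hesseF ζ).erase u).erase w).card = (hesseF ζ).card - 2 := by
      rw [Finset.card_erase_of_mem hwF, Finset.card_erase_of_mem huF]; omega
    have := hesseF_card_le ζ
    omega
  -- values of f on the basis
  set a := f (1, 0, 0) with ha
  set b := f (0, 1, 0) with hb
  set c := f (0, 0, 1) with hc
  have hf : ∀ x y z : ℂ, f (x, y, z) = x * a + y * b + z * c := by
    intro x y z
    have hv : (x, y, z) = x • ((1 : ℂ), (0 : ℂ), (0 : ℂ)) + y • (0, 1, 0) + z • (0, 0, 1) := by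
      simp [Prod.ext_iff]
    rw [hv, map_add, map_add, map_smul, map_smul, map_smul, smul_eq_mul, smul_eq_mul,
      smul_eq_mul, ← ha, ← hb, ← hc]
  -- membership of the nine points
  have hmem : ∀ i j : Fin 3, ((1 : ℂ), ζ ^ (i : ℕ), ζ ^ (j : ℕ)) ∈ hesseP ζ :=
    fun i j => Or.inl ⟨i, j, rfl⟩
  -- row lemma: for each i, c = 0 and a + ζ^i * b = 0
  have row : ∀ i : Fin 3, c = 0 ∧ a + ζ ^ (i : ℕ) * b = 0 := by
    intro i
    have p01 := pair _ _ (hmem i 0) (hmem i 1)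
      (fun h => hpow 0 1 (by decide) (congrArg (fun p => p.2.2) h))
    have p02 := pair _ _ (hmem i 0) (hmem i 2)
      (fun h => hpow 0 2 (by decide) (congrArg (fun p => p.2.2) h))
    have p12 := pair _ _ (hmem i 1) (hmem i 2)
      (fun h => hpow 1 2 (by decide) (congrArg (fun p => p.2.2) h))
    rw [hf] at p01 p02 p12
    rw [hf ((1:ℂ)) (ζ ^ (i : ℕ)) (ζ ^ ((1:Fin 3) : ℕ))] at p01
    rw [hf ((1:ℂ)) (ζ ^ (i : ℕ)) (ζ ^ ((2:Fin 3) : ℕ))] at p02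
    rw [hf ((1:ℂ)) (ζ ^ (i : ℕ)) (ζ ^ ((2:Fin 3) : ℕ))] at p12
    -- from two vanishing rows entries, cancel c
    have key : ∀ j₁ j₂ : Fin 3, j₁ ≠ j₂ →
        1 * a + ζ ^ (i : ℕ) * b + ζ ^ (j₁ : ℕ) * c = 0 →
        1 * a + ζ ^ (i : ℕ) * b + ζ ^ (j₂ : ℕ) * c = 0 →
        c = 0 ∧ a + ζ ^ (i : ℕ) * b = 0 := by
      intro j₁ j₂ hne e1 e2
      have hc0 : c = 0 := by
        have hd : (ζ ^ (j₁ : ℕ) - ζ ^ (j₂ : ℕ)) * c = 0 := by linear_combination e1 - e2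
        rcases mul_eq_zero.1 hd with h | h
        · exact absurd (sub_eq_zero.1 h) (hpow j₁ j₂ hne)
        · exact h
      refine ⟨hc0, ?_⟩
      rw [hc0] at e1
      linear_combination e1
    rcases p01 with h0 | h1
    · rcases p02 with h0' | h2
      · rcases p12 with h1 | h2
        · exact key 0 1 (by decide) h0 h1
        · exact key 0 2 (by decide) h0 h2
      · exact key 0 2 (by decide) h0 h2
    · rcases p02 with h0 | h2
      · exact key 0 1 (by decide) h0 h1
      · exact key 1 2 (by decide) h1 h2
  obtain ⟨hc0, h0⟩ := row 0
  obtain ⟨-, h1⟩ := row 1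
  have hζ1 : ζ ≠ 1 := by
    intro h
    exact absurd (by rw [h]; simp : ζ ^ ((0 : Fin 3) : ℕ) = ζ ^ ((1 : Fin 3) : ℕ))
      (hpow 0 1 (by decide))
  have hb0 : b = 0 := by
    have : (1 - ζ) * b = 0 := by
      simp only [Fin.val_zero, pow_zero, Fin.val_one, pow_one] at h0 h1
      linear_combination h0 - h1
    rcases mul_eq_zero.1 this with h | h
    · exact absurd (by linear_combination -h : ζ = 1) hζ1
    · exact h
  have ha0 : a = 0 := by
    simp only [Fin.val_zero, pow_zero] at h0
    linear_combination h0 - hb0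
  apply hf0
  apply LinearMap.ext
  rintro ⟨x, y, z⟩
  simp [hf, ha0, hb0, hc0]
end

section
/- Let ζ ∈ ℂ be a primitive cube root of unity and let N be the central subgroup of GL₂(ℂ) generated by ζ·I₂. Then the subgroup of the quotient group GL₂(ℂ)/N generated by the images of the two matrices [[1,2],[0,1]] and [[1,0],[2,1]] is a nonabelian free group of rank 2; that is, there is an injective group homomorphism from the free group on two generators onto this subgroup sending the two generators to the images of these two matrices. -/
open Matrix Pointwise

noncomputable section SanovAux

/-- Nonzero vectors in `ℂ²`, the ping-pong playground. -/
abbrev NZV : Type := {v : Fin 2 → ℂ // v ≠ 0}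

instance : SMul (GL (Fin 2) ℂ) NZV where
  smul g v := ⟨((g : Matrix (Fin 2) (Fin 2) ℂ)).mulVec v.1, by
    intro h
    apply v.2
    have h2 := congrArg (fun w => ((g⁻¹ : GL (Fin 2) ℂ) : Matrix (Fin 2) (Fin 2) ℂ).mulVec w) h
    simp only [Matrix.mulVec_mulVec, Matrix.mulVec_zero] at h2
    have h3 : ((g⁻¹ : GL (Fin 2) ℂ) : Matrix (Fin 2) (Fin 2) ℂ) * (g : Matrix (Fin 2) (Fin 2) ℂ)
        = 1 := by
      rw [← Matrix.GeneralLinearGroup.coe_mul, inv_mul_cancel]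
      rfl
    rwa [h3, Matrix.one_mulVec] at h2⟩

@[simp] lemma NZV_smul_coe (g : GL (Fin 2) ℂ) (v : NZV) :
    (g • v).1 = ((g : Matrix (Fin 2) (Fin 2) ℂ)).mulVec v.1 := rfl

instance : MulAction (GL (Fin 2) ℂ) NZV where
  one_smul v := Subtype.ext (by simp)
  mul_smul g h v := Subtype.ext (by
    simp only [NZV_smul_coe, Matrix.mulVec_mulVec, Units.val_mul])

end SanovAux

/-- Let `ζ` be a primitive cube root of unity and `N = ⟨ζ·I₂⟩` the central (hence normal)
subgroup of `GL₂(ℂ)` generated by the scalar matrix `ζ·I₂`. The subgroup of `GL₂(ℂ)/N`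
generated by the images of `[[1,2],[0,1]]` and `[[1,0],[2,1]]` is a nonabelian free group
of rank 2: there is an injective homomorphism from the free group on two generators onto
this subgroup sending the generators to the images of these two matrices. -/
theorem free_group_in_gl2c_mod_zeta_center
    (ζ : ℂ) (hζ : IsPrimitiveRoot ζ 3)
    (g : GL (Fin 2) ℂ)
    (hg : (g : Matrix (Fin 2) (Fin 2) ℂ) = ζ • (1 : Matrix (Fin 2) (Fin 2) ℂ))
    [hN : (Subgroup.zpowers g).Normal]
    (S T : GL (Fin 2) ℂ)
    (hS : (S : Matrix (Fin 2) (Fin 2) ℂ) = !![1, 2; 0, 1])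
    (hT : (T : Matrix (Fin 2) (Fin 2) ℂ) = !![1, 0; 2, 1]) :
    ∃ f : FreeGroup (Fin 2) →* GL (Fin 2) ℂ ⧸ Subgroup.zpowers g,
      Function.Injective f ∧
      f (FreeGroup.of 0) = QuotientGroup.mk' (Subgroup.zpowers g) S ∧
      f (FreeGroup.of 1) = QuotientGroup.mk' (Subgroup.zpowers g) T ∧
      f.range = Subgroup.closure {QuotientGroup.mk' (Subgroup.zpowers g) S,
        QuotientGroup.mk' (Subgroup.zpowers g) T} := by
  classical
  -- the generators
  set a : Fin 2 → GL (Fin 2) ℂ := ![S, T] with ha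
  have ha0 : a 0 = S := rfl
  have ha1 : a 1 = T := rfl
  -- the ping-pong sets
  set X : Fin 2 → Set NZV :=
    ![{v | Complex.normSq (v.1 1) ≤ (v.1 0 * (starRingEnd ℂ) (v.1 1)).re},
      {v | Complex.normSq (v.1 0) < (v.1 0 * (starRingEnd ℂ) (v.1 1)).re}] with hX
  set Y : Fin 2 → Set NZV :=
    ![{v | (v.1 0 * (starRingEnd ℂ) (v.1 1)).re < -Complex.normSq (v.1 1)},
      {v | (v.1 0 * (starRingEnd ℂ) (v.1 1)).re ≤ -Complex.normSq (v.1 0)}] with hY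
  -- components of S • v and T • v
  have hSv : ∀ v : NZV, (S • v).1 0 = v.1 0 + 2 * v.1 1 ∧ (S • v).1 1 = v.1 1 := by
    intro v
    constructor <;>
      simp [NZV_smul_coe, hS, Matrix.mulVec, dotProduct, Fin.sum_univ_two, Matrix.vecHead, Matrix.vecTail]
  have hTv : ∀ v : NZV, (T • v).1 0 = v.1 0 ∧ (T • v).1 1 = 2 * v.1 0 + v.1 1 := by
    intro v
    constructor <;>
      simp [NZV_smul_coe, hT, Matrix.mulVec, dotProduct, Fin.sum_univ_two, Matrix.vecHead, Matrix.vecTail]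
  -- core ping-pong estimates
  have coreS : ∀ v : NZV,
      -Complex.normSq (v.1 1) ≤ (v.1 0 * (starRingEnd ℂ) (v.1 1)).re → S • v ∈ X 0 := by
    intro v hv
    have h0 := (hSv v).1
    have h1 := (hSv v).2
    show Complex.normSq ((S • v).1 1) ≤ ((S • v).1 0 * (starRingEnd ℂ) ((S • v).1 1)).re
    rw [h0, h1]
    simp only [Complex.normSq_apply, Complex.mul_re, Complex.add_re, Complex.add_im,
      Complex.mul_im, Complex.conj_re, Complex.conj_im, Complex.re_ofNat, Complex.im_ofNat,
      Complex.normSq_apply] at *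
    nlinarith [hv]
  have coreT : ∀ v : NZV,
      -Complex.normSq (v.1 0) < (v.1 0 * (starRingEnd ℂ) (v.1 1)).re → T • v ∈ X 1 := by
    intro v hv
    have h0 := (hTv v).1
    have h1 := (hTv v).2
    show Complex.normSq ((T • v).1 0) < ((T • v).1 0 * (starRingEnd ℂ) ((T • v).1 1)).re
    rw [h0, h1]
    simp only [Complex.normSq_apply, Complex.mul_re, Complex.add_re, Complex.add_im,
      Complex.mul_im, Complex.conj_re, Complex.conj_im, Complex.re_ofNat, Complex.im_ofNat,
      Complex.normSq_apply] at *
    nlinarith [hv]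
  -- Cauchy-Schwarz
  have hCS : ∀ v : NZV, ((v.1 0 * (starRingEnd ℂ) (v.1 1)).re) ^ 2
      ≤ Complex.normSq (v.1 0) * Complex.normSq (v.1 1) := by
    intro v
    simp only [Complex.normSq_apply, Complex.mul_re, Complex.conj_re, Complex.conj_im]
    nlinarith [sq_nonneg ((v.1 0).re * (v.1 1).im - (v.1 0).im * (v.1 1).re),
      sq_nonneg ((v.1 0).re * (v.1 1).re + (v.1 0).im * (v.1 1).im)]
  have hnz : ∀ v : NZV, 0 < Complex.normSq (v.1 0) ∨ 0 < Complex.normSq (v.1 1) := by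
    intro v
    by_contra h
    push_neg at h
    have h0 : v.1 0 = 0 := Complex.normSq_eq_zero.mp (le_antisymm h.1 (Complex.normSq_nonneg _))
    have h1 : v.1 1 = 0 := Complex.normSq_eq_zero.mp (le_antisymm h.2 (Complex.normSq_nonneg _))
    apply v.2
    funext i
    fin_cases i <;> assumption
  -- the hypotheses of the ping-pong lemma
  have hXnonempty : ∀ i, (X i).Nonempty := by
    intro i
    fin_cases i
    · refine ⟨⟨![1, 0], fun h => by simpa using congrFun h 0⟩, ?_⟩
      show Complex.normSq _ ≤ _
      norm_num
    · refine ⟨⟨![1, 2], fun h => by simpa using congrFun h 0⟩, ?_⟩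
      show Complex.normSq _ < _
      norm_num
  have dX01 : Disjoint (X 0) (X 1) := by
    rw [Set.disjoint_left]
    intro v hv0 hv1
    have h0 : Complex.normSq (v.1 1) ≤ (v.1 0 * (starRingEnd ℂ) (v.1 1)).re := hv0
    have h1 : Complex.normSq (v.1 0) < (v.1 0 * (starRingEnd ℂ) (v.1 1)).re := hv1
    nlinarith [hCS v, Complex.normSq_nonneg (v.1 0), Complex.normSq_nonneg (v.1 1)]
  have dY01 : Disjoint (Y 0) (Y 1) := by
    rw [Set.disjoint_left]
    intro v hv0 hv1
    have h0 : (v.1 0 * (starRingEnd ℂ) (v.1 1)).re < -Complex.normSq (v.1 1) := hv0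
    have h1 : (v.1 0 * (starRingEnd ℂ) (v.1 1)).re ≤ -Complex.normSq (v.1 0) := hv1
    nlinarith [hCS v, Complex.normSq_nonneg (v.1 0), Complex.normSq_nonneg (v.1 1)]
  have dXY : ∀ i j, Disjoint (X i) (Y j) := by
    intro i j
    fin_cases i <;> fin_cases j <;> rw [Set.disjoint_left] <;> intro v hx hy
    · have h0 : Complex.normSq (v.1 1) ≤ (v.1 0 * (starRingEnd ℂ) (v.1 1)).re := hx
      have h1 : (v.1 0 * (starRingEnd ℂ) (v.1 1)).re < -Complex.normSq (v.1 1) := hy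
      nlinarith [Complex.normSq_nonneg (v.1 1)]
    · have h0 : Complex.normSq (v.1 1) ≤ (v.1 0 * (starRingEnd ℂ) (v.1 1)).re := hx
      have h1 : (v.1 0 * (starRingEnd ℂ) (v.1 1)).re ≤ -Complex.normSq (v.1 0) := hy
      rcases hnz v with h | h <;>
        nlinarith [Complex.normSq_nonneg (v.1 0), Complex.normSq_nonneg (v.1 1)]
    · have h0 : Complex.normSq (v.1 0) < (v.1 0 * (starRingEnd ℂ) (v.1 1)).re := hx
      have h1 : (v.1 0 * (starRingEnd ℂ) (v.1 1)).re < -Complex.normSq (v.1 1) := hy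
      nlinarith [Complex.normSq_nonneg (v.1 0), Complex.normSq_nonneg (v.1 1)]
    · have h0 : Complex.normSq (v.1 0) < (v.1 0 * (starRingEnd ℂ) (v.1 1)).re := hx
      have h1 : (v.1 0 * (starRingEnd ℂ) (v.1 1)).re ≤ -Complex.normSq (v.1 0) := hy
      nlinarith [Complex.normSq_nonneg (v.1 0)]
  have hXdisj : Pairwise (Function.onFun Disjoint X) := by
    intro i j hij
    fin_cases i <;> fin_cases j <;> first | exact absurd rfl hij | exact dX01 | exact dX01.symm
  have hYdisj : Pairwise (Function.onFun Disjoint Y) := by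
    intro i j hij
    fin_cases i <;> fin_cases j <;> first | exact absurd rfl hij | exact dY01 | exact dY01.symm
  -- the ping-pong moves
  have hXmove : ∀ i, a i • (Y i)ᶜ ⊆ X i := by
    intro i
    fin_cases i <;> intro u hu <;> obtain ⟨w, hw, rfl⟩ := hu
    · have hw' : -Complex.normSq (w.1 1) ≤ (w.1 0 * (starRingEnd ℂ) (w.1 1)).re := by
        have : ¬ ((w.1 0 * (starRingEnd ℂ) (w.1 1)).re < -Complex.normSq (w.1 1)) := hw
        linarith [not_lt.mp this]
      exact coreS w hw'
    · have hw' : -Complex.normSq (w.1 0) < (w.1 0 * (starRingEnd ℂ) (w.1 1)).re := by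
        have : ¬ ((w.1 0 * (starRingEnd ℂ) (w.1 1)).re ≤ -Complex.normSq (w.1 0)) := hw
        linarith [not_le.mp this]
      exact coreT w hw'
  have hYmove : ∀ i, a⁻¹ i • (X i)ᶜ ⊆ Y i := by
    intro i
    fin_cases i <;> intro u hu <;> obtain ⟨w, hw, rfl⟩ := hu
    · by_contra hnot
      apply hw
      have hv' : -Complex.normSq (((a⁻¹ 0 : GL (Fin 2) ℂ) • w).1 1)
          ≤ ((((a⁻¹ 0 : GL (Fin 2) ℂ) • w).1 0) *
            (starRingEnd ℂ) (((a⁻¹ 0 : GL (Fin 2) ℂ) • w).1 1)).re := by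
        have : ¬ (((((a⁻¹ 0 : GL (Fin 2) ℂ) • w).1 0) *
            (starRingEnd ℂ) (((a⁻¹ 0 : GL (Fin 2) ℂ) • w).1 1)).re
            < -Complex.normSq (((a⁻¹ 0 : GL (Fin 2) ℂ) • w).1 1)) := hnot
        linarith [not_lt.mp this]
      have := coreS _ hv'
      have heq : S • ((a⁻¹ 0 : GL (Fin 2) ℂ) • w) = w := by
        show S • (S⁻¹ • w) = w
        exact smul_inv_smul _ _
      rwa [heq] at this
    · by_contra hnot
      apply hw
      have hv' : -Complex.normSq (((a⁻¹ 1 : GL (Fin 2) ℂ) • w).1 0)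
          < ((((a⁻¹ 1 : GL (Fin 2) ℂ) • w).1 0) *
            (starRingEnd ℂ) (((a⁻¹ 1 : GL (Fin 2) ℂ) • w).1 1)).re := by
        have : ¬ (((((a⁻¹ 1 : GL (Fin 2) ℂ) • w).1 0) *
            (starRingEnd ℂ) (((a⁻¹ 1 : GL (Fin 2) ℂ) • w).1 1)).re
            ≤ -Complex.normSq (((a⁻¹ 1 : GL (Fin 2) ℂ) • w).1 0)) := hnot
        linarith [not_le.mp this]
      have := coreT _ hv'
      have heq : T • ((a⁻¹ 1 : GL (Fin 2) ℂ) • w) = w := by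
        show T • (T⁻¹ • w) = w
        exact smul_inv_smul _ _
      rwa [heq] at this
  -- Sanov: the lift is injective
  have hφinj : Function.Injective (FreeGroup.lift a) :=
    FreeGroup.injective_lift_of_ping_pong a X Y hXnonempty hXdisj hYdisj dXY hXmove hYmove
  -- determinants
  have hdet1 : ∀ w : FreeGroup (Fin 2),
      Matrix.GeneralLinearGroup.det (FreeGroup.lift a w) = 1 := by
    have : (Matrix.GeneralLinearGroup.det).comp (FreeGroup.lift a)
        = (1 : FreeGroup (Fin 2) →* ℂˣ) := by
      apply FreeGroup.ext_hom
      intro i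
      simp only [MonoidHom.comp_apply, FreeGroup.lift_apply_of, MonoidHom.one_apply]
      fin_cases i <;> apply Units.ext
      · show ((a 0 : Matrix (Fin 2) (Fin 2) ℂ)).det = 1
        rw [ha0, hS, Matrix.det_fin_two_of]; ring
      · show ((a 1 : Matrix (Fin 2) (Fin 2) ℂ)).det = 1
        rw [ha1, hT, Matrix.det_fin_two_of]; ring
    intro w
    have := DFunLike.congr_fun this w
    simpa using this
  -- g has order dividing 3, det g = ζ²
  have hg3 : g ^ (3 : ℕ) = 1 := by
    apply Units.ext
    show ((g ^ (3 : ℕ) : GL (Fin 2) ℂ) : Matrix (Fin 2) (Fin 2) ℂ) = 1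
    rw [Units.val_pow_eq_pow_val, hg, smul_pow, one_pow, hζ.pow_eq_one, one_smul]
  have hdetg : ((Matrix.GeneralLinearGroup.det g : ℂˣ) : ℂ) = ζ ^ 2 := by
    show ((g : Matrix (Fin 2) (Fin 2) ℂ)).det = ζ ^ 2
    rw [hg, Matrix.det_smul, Matrix.det_one, mul_one]
    simp [Fintype.card_fin]
  -- kernel step
  have hker : ∀ w : FreeGroup (Fin 2), FreeGroup.lift a w ∈ Subgroup.zpowers g → w = 1 := by
    intro w hw
    obtain ⟨n, hn⟩ := Subgroup.mem_zpowers_iff.mp hw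
    have hd : (Matrix.GeneralLinearGroup.det g) ^ n = 1 := by
      rw [← map_zpow, hn, hdet1]
    have hzeta : (ζ : ℂ) ^ (2 * n) = 1 := by
      have := congrArg (Units.val) hd
      rw [Units.val_zpow_eq_zpow_val, hdetg, Units.val_one] at this
      have h2 : (ζ ^ (2 : ℤ)) ^ n = 1 := by exact_mod_cast this
      rwa [← _root_.zpow_mul] at h2
    have hdvd : (3 : ℤ) ∣ 2 * n := (hζ.zpow_eq_one_iff_dvd _).mp (by exact_mod_cast hzeta)
    have hdvd' : (3 : ℤ) ∣ n := by omega
    obtain ⟨m, rfl⟩ := hdvd'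
    have : g ^ (3 * m) = 1 := by
      rw [_root_.zpow_mul]
      have : g ^ (3 : ℤ) = 1 := by
        rw [show (3 : ℤ) = ((3 : ℕ) : ℤ) by norm_num, zpow_natCast, hg3]
      rw [this, _root_.one_zpow]
    apply hφinj
    rw [_root_.map_one, ← hn, this]
  -- assemble f
  refine ⟨(QuotientGroup.mk' (Subgroup.zpowers g)).comp (FreeGroup.lift a), ?_, ?_, ?_, ?_⟩
  · intro w w' hww'
    have h1 : FreeGroup.lift a w * (FreeGroup.lift a w')⁻¹ ∈ Subgroup.zpowers g := by
      have : (QuotientGroup.mk' (Subgroup.zpowers g)) (FreeGroup.lift a w)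
          = (QuotientGroup.mk' (Subgroup.zpowers g)) (FreeGroup.lift a w') := hww'
      have h2 : (QuotientGroup.mk' (Subgroup.zpowers g))
          (FreeGroup.lift a w * (FreeGroup.lift a w')⁻¹) = 1 := by
        rw [_root_.map_mul, _root_.map_inv, this, mul_inv_cancel]
      rwa [← QuotientGroup.ker_mk' (Subgroup.zpowers g), MonoidHom.mem_ker]
    have := hker _ (by rwa [← _root_.map_inv, ← _root_.map_mul] at h1)
    exact mul_inv_eq_one.mp this
  · simp [ha0]
  · simp [ha1]
  · rw [MonoidHom.range_comp, FreeGroup.range_lift_eq_closure, MonoidHom.map_closure]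
    congr 1
    have : Set.range a = {S, T} := by
      ext x
      simp only [Set.mem_range, Set.mem_insert_iff, Set.mem_singleton_iff]
      constructor
      · rintro ⟨i, rfl⟩; fin_cases i
        · left; exact ha0
        · right; exact ha1
      · rintro (rfl | rfl)
        · exact ⟨0, ha0⟩
        · exact ⟨1, ha1⟩
    rw [this]
    simp [Set.image_insert_eq]
end
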